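/- Let n ≥ 2 and let P : ℤ/2n → ℝ² be an axis-aligned 2n-gon. For 0 ≤ i ≤ n−2 and 0 ≤ j ≤ n−1 let A_i(j) = P(i + 2j) ∈ ℝ² (so each A_i is a sequence of n alternate vertices of P), and let L(i,j) ∈ ℝⁿ be a parallel lifting of the A_i, i.e.: the first two coordinates of L(i,j) are the coordinates of A_i(j), and for every j and every coordinate index t with 3 ≤ t ≤ n, the t-th coordinate of L(i,j) is independent of i. Then all the lifted centroids coincide: for all i, i' ∈ {0,…,n−2}, (1/n)·Σ_{j=0}^{n-1} L(i,j) = (1/n)·Σ_{j=0}^{n-1} L(i',j); moreover the first two coordinates of this common centroid equal the center of mass of P, namely (1/(2n))·Σ_{k ∈ ℤ/2n} P(k). -/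

import Mathlib

/-- An axis-aligned `2n`-gon: the edge `P(i+1) - P(i)` is horizontal when `i` is even
and vertical when `i` is odd. -/
def IsAxisAligned2 (n : ℕ) (P : ZMod (2 * n) → (Fin 2 → ℝ)) : Prop :=
  ∀ i : ZMod (2 * n),
    (Even i.val → (P (i + 1) - P i) 1 = 0) ∧
    (¬ Even i.val → (P (i + 1) - P i) 0 = 0)

private lemma sum_range_double {M : Type*} [AddCommMonoid M] (f : ℕ → M) (N : ℕ) :
    ∑ m ∈ Finset.range (2 * N), f m =
      ∑ j ∈ Finset.range N, f (2 * j) + ∑ j ∈ Finset.range N, f (2 * j + 1) := by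
  induction N with
  | zero => simp
  | succ k ih =>
    have h2 : 2 * (k + 1) = 2 * k + 1 + 1 := by ring
    rw [h2, Finset.sum_range_succ, Finset.sum_range_succ, ih,
      Finset.sum_range_succ (fun j => f (2 * j)) k,
      Finset.sum_range_succ (fun j => f (2 * j + 1)) k]
    abel

/-- **Lemma (centroids of a parallel lifting coincide).** Let `P` be an axis-aligned
`2n`-gon, `A_i(j) = P(i + 2j)` for `0 ≤ i ≤ n-2`, `0 ≤ j ≤ n-1`, and let `L(i,j) ∈ ℝⁿ` be a
parallel lifting of the `A_i` (same first two coordinates as `A_i(j)`, and the coordinates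
`3, …, n` of `L(i,j)` independent of `i`). Then all the lifted centroids coincide, and the
first two coordinates of the common centroid equal the center of mass of `P`. -/
theorem parallel_lifting_centroids_coincide
    (n : ℕ) (hn : 2 ≤ n)
    (P : ZMod (2 * n) → (Fin 2 → ℝ))
    (haxis : IsAxisAligned2 n P)
    (L : ℕ → ℕ → (Fin n → ℝ))
    (hlift : ∀ i ≤ n - 2, ∀ j ≤ n - 1,
      L i j ⟨0, by omega⟩ = P ((i + 2 * j : ℕ) : ZMod (2 * n)) 0 ∧
      L i j ⟨1, by omega⟩ = P ((i + 2 * j : ℕ) : ZMod (2 * n)) 1)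
    (hparallel : ∀ i ≤ n - 2, ∀ i' ≤ n - 2, ∀ j ≤ n - 1, ∀ t : Fin n,
      2 ≤ (t : ℕ) → L i j t = L i' j t) :
    (∀ i ≤ n - 2, ∀ i' ≤ n - 2,
      (1 / (n : ℝ)) • ∑ j ∈ Finset.range n, L i j =
        (1 / (n : ℝ)) • ∑ j ∈ Finset.range n, L i' j) ∧
    (∀ i ≤ n - 2,
      ((1 / (n : ℝ)) • ∑ j ∈ Finset.range n, L i j) ⟨0, by omega⟩ =
        ((1 / (2 * n : ℝ)) • ∑ k : Fin (2 * n), P ((k : ℕ) : ZMod (2 * n))) 0 ∧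
      ((1 / (n : ℝ)) • ∑ j ∈ Finset.range n, L i j) ⟨1, by omega⟩ =
        ((1 / (2 * n : ℝ)) • ∑ k : Fin (2 * n), P ((k : ℕ) : ZMod (2 * n))) 1) := by
  haveI : NeZero (2 * n) := ⟨by omega⟩
  -- parity of values of natural casts in `ZMod (2*n)`
  have hval : ∀ m : ℕ, Even (((m : ℕ) : ZMod (2 * n)).val) ↔ Even m := by
    intro m
    rw [ZMod.val_natCast, Nat.even_iff, Nat.even_iff, Nat.mod_mod_of_dvd m ⟨n, rfl⟩]
  have cast1 : ∀ m : ℕ, ((m : ZMod (2 * n)) + 1) = ((m + 1 : ℕ) : ZMod (2 * n)) := by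
    intro m; push_cast; ring
  -- horizontal / vertical steps
  have heven : ∀ m : ℕ, Even m →
      P ((m + 1 : ℕ) : ZMod (2 * n)) 1 = P ((m : ℕ) : ZMod (2 * n)) 1 := by
    intro m hm
    have h := (haxis ((m : ℕ) : ZMod (2 * n))).1 ((hval m).2 hm)
    rw [cast1 m] at h
    have h' : P ((m + 1 : ℕ) : ZMod (2 * n)) 1 - P ((m : ℕ) : ZMod (2 * n)) 1 = 0 := h
    linarith
  have hodd : ∀ m : ℕ, ¬ Even m →
      P ((m + 1 : ℕ) : ZMod (2 * n)) 0 = P ((m : ℕ) : ZMod (2 * n)) 0 := by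
    intro m hm
    have h := (haxis ((m : ℕ) : ZMod (2 * n))).2 (fun he => hm ((hval m).1 he))
    rw [cast1 m] at h
    have h' : P ((m + 1 : ℕ) : ZMod (2 * n)) 0 - P ((m : ℕ) : ZMod (2 * n)) 0 = 0 := h
    linarith
  -- wrap-around
  have hwrap : ∀ m : ℕ, (((m + 2 * n : ℕ)) : ZMod (2 * n)) = ((m : ℕ) : ZMod (2 * n)) := by
    intro m; rw [Nat.cast_add, ZMod.natCast_self, add_zero]
  -- cyclic shift of the alternate sums
  have hshift : ∀ (c : Fin 2) (i : ℕ),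
      (∑ j ∈ Finset.range n, P ((i + 2 * (j + 1) : ℕ) : ZMod (2 * n)) c) =
        ∑ j ∈ Finset.range n, P ((i + 2 * j : ℕ) : ZMod (2 * n)) c := by
    intro c i
    have h1 := Finset.sum_range_succ' (fun j => P ((i + 2 * j : ℕ) : ZMod (2 * n)) c) n
    have h2 := Finset.sum_range_succ (fun j => P ((i + 2 * j : ℕ) : ZMod (2 * n)) c) n
    have h3 : P ((i + 2 * n : ℕ) : ZMod (2 * n)) c = P ((i + 2 * 0 : ℕ) : ZMod (2 * n)) c := by
      rw [hwrap i]; norm_num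
    calc (∑ j ∈ Finset.range n, P ((i + 2 * (j + 1) : ℕ) : ZMod (2 * n)) c)
        = (∑ j ∈ Finset.range (n + 1), P ((i + 2 * j : ℕ) : ZMod (2 * n)) c)
            - P ((i + 2 * 0 : ℕ) : ZMod (2 * n)) c := by rw [h1]; ring
      _ = ∑ j ∈ Finset.range n, P ((i + 2 * j : ℕ) : ZMod (2 * n)) c := by
            rw [h2, h3]; ring
  -- one step: shifting i by 1 does not change the alternate sums
  have hS : ∀ (c : Fin 2) (i : ℕ),
      (∑ j ∈ Finset.range n, P ((i + 1 + 2 * j : ℕ) : ZMod (2 * n)) c) =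
        ∑ j ∈ Finset.range n, P ((i + 2 * j : ℕ) : ZMod (2 * n)) c := by
    intro c i
    by_cases hi : Even i
    · fin_cases c
      · -- coordinate 0, i even: i+1+2j is odd, step up then cyclic shift
        calc (∑ j ∈ Finset.range n, P ((i + 1 + 2 * j : ℕ) : ZMod (2 * n)) 0)
            = ∑ j ∈ Finset.range n, P ((i + 2 * (j + 1) : ℕ) : ZMod (2 * n)) 0 := by
              refine Finset.sum_congr rfl fun j _ => ?_
              have h := hodd (i + 1 + 2 * j) (by rcases hi with ⟨r, hr⟩; intro ⟨s, hs⟩; omega)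
              have e1 : i + 1 + 2 * j + 1 = i + 2 * (j + 1) := by ring
              rw [e1] at h
              exact h.symm
          _ = _ := hshift 0 i
      · refine Finset.sum_congr rfl fun j _ => ?_
        have h := heven (i + 2 * j) (by rcases hi with ⟨r, hr⟩; exact ⟨r + j, by omega⟩)
        have e1 : i + 2 * j + 1 = i + 1 + 2 * j := by ring
        rw [e1] at h
        exact h
    · fin_cases c
      · refine Finset.sum_congr rfl fun j _ => ?_
        have h := hodd (i + 2 * j) (by intro ⟨r, hr⟩; exact hi ⟨r - j, by omega⟩)
        have e1 : i + 2 * j + 1 = i + 1 + 2 * j := by ring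
        rw [e1] at h
        exact h
      · calc (∑ j ∈ Finset.range n, P ((i + 1 + 2 * j : ℕ) : ZMod (2 * n)) 1)
            = ∑ j ∈ Finset.range n, P ((i + 2 * (j + 1) : ℕ) : ZMod (2 * n)) 1 := by
              refine Finset.sum_congr rfl fun j _ => ?_
              have h := heven (i + 1 + 2 * j) (by
                rcases Nat.not_even_iff_odd.1 hi with ⟨r, hr⟩; exact ⟨r + 1 + j, by omega⟩)
              have e1 : i + 1 + 2 * j + 1 = i + 2 * (j + 1) := by ring
              rw [e1] at h
              exact h.symm
          _ = _ := hshift 1 i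
  -- all alternate sums equal the one at i = 0
  have hSall : ∀ (c : Fin 2) (i : ℕ),
      (∑ j ∈ Finset.range n, P ((i + 2 * j : ℕ) : ZMod (2 * n)) c) =
        ∑ j ∈ Finset.range n, P ((2 * j : ℕ) : ZMod (2 * n)) c := by
    intro c i
    induction i with
    | zero => simp
    | succ k ih => rw [← ih, ← hS c k]
  -- total sum is twice the alternate sum
  have hTotal : ∀ c : Fin 2,
      (∑ m ∈ Finset.range (2 * n), P ((m : ℕ) : ZMod (2 * n)) c) =
        2 * ∑ j ∈ Finset.range n, P ((2 * j : ℕ) : ZMod (2 * n)) c := by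
    intro c
    rw [sum_range_double (fun m => P ((m : ℕ) : ZMod (2 * n)) c) n]
    have h1 : (∑ j ∈ Finset.range n, P ((2 * j + 1 : ℕ) : ZMod (2 * n)) c) =
        ∑ j ∈ Finset.range n, P ((1 + 2 * j : ℕ) : ZMod (2 * n)) c := by
      refine Finset.sum_congr rfl fun j _ => ?_
      rw [Nat.add_comm]
    rw [h1, hSall c 1]
    ring
  -- key: sums of the lifts evaluated at coordinates 0 and 1
  have hL0 : ∀ i ≤ n - 2,
      (∑ j ∈ Finset.range n, L i j ⟨0, by omega⟩) =
        ∑ j ∈ Finset.range n, P ((2 * j : ℕ) : ZMod (2 * n)) 0 := by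
    intro i hi
    rw [← hSall 0 i]
    refine Finset.sum_congr rfl fun j hj => ?_
    exact (hlift i hi j (by simp at hj; omega)).1
  have hL1 : ∀ i ≤ n - 2,
      (∑ j ∈ Finset.range n, L i j ⟨1, by omega⟩) =
        ∑ j ∈ Finset.range n, P ((2 * j : ℕ) : ZMod (2 * n)) 1 := by
    intro i hi
    rw [← hSall 1 i]
    refine Finset.sum_congr rfl fun j hj => ?_
    exact (hlift i hi j (by simp at hj; omega)).2
  have hnR : (n : ℝ) ≠ 0 := by positivity
  constructor
  · intro i hi i' hi'
    congr 1
    funext t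
    rw [Finset.sum_apply, Finset.sum_apply]
    by_cases ht : 2 ≤ (t : ℕ)
    · exact Finset.sum_congr rfl fun j hj =>
        hparallel i hi i' hi' j (by simp at hj; omega) t ht
    · have h01 : (t : ℕ) = 0 ∨ (t : ℕ) = 1 := by omega
      rcases h01 with h | h
      · have ht0 : t = ⟨0, by omega⟩ := Fin.ext h
        rw [ht0]
        rw [hL0 i hi, hL0 i' hi']
      · have ht1 : t = ⟨1, by omega⟩ := Fin.ext h
        rw [ht1]
        rw [hL1 i hi, hL1 i' hi']
  · intro i hi
    have hFin : ∀ c : Fin 2,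
        (∑ k : Fin (2 * n), P ((k : ℕ) : ZMod (2 * n))) c =
          2 * ∑ j ∈ Finset.range n, P ((2 * j : ℕ) : ZMod (2 * n)) c := by
      intro c
      rw [Finset.sum_apply, ← hTotal c,
        Fin.sum_univ_eq_sum_range (fun k => P ((k : ℕ) : ZMod (2 * n)) c) (2 * n)]
    constructor
    · rw [Pi.smul_apply, Pi.smul_apply, smul_eq_mul, smul_eq_mul,
        Finset.sum_apply, hL0 i hi, hFin 0]
      field_simp
    · rw [Pi.smul_apply, Pi.smul_apply, smul_eq_mul, smul_eq_mul,
        Finset.sum_apply, hL1 i hi, hFin 1]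
      field_simp
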